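/- Let m, n ≥ 1 be positive integers such that m ≤ 2^r ≤ n < 2^{r+1} for some non-negative integer r. Then there exists a continuous map f : S^{n−1} → ℝ^{m+n−1} with f(−v) = −f(v) for all v ∈ S^{n−1} (for example the composition of the inclusion S^{n−1} ⊆ ℝⁿ with a linear embedding ℝⁿ ↪ ℝ^{m+n−1}) such that every finite subset X ⊆ S^{n−1} for which 0 lies in the convex hull of f(X) has diameter at least π − arccos(1/n). -/

import Mathlib

open Metric RealInnerProductSpace

/-- key inner-product lemma -/
lemma aux_inner (n : ℕ) (hn : 1 ≤ n) (X : Finset (EuclideanSpace ℝ (Fin n)))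
    (hX : ↑X ⊆ sphere (0 : EuclideanSpace ℝ (Fin n)) 1)
    (h0 : (0 : EuclideanSpace ℝ (Fin n)) ∈ convexHull ℝ (X : Set (EuclideanSpace ℝ (Fin n)))) :
    ∃ x ∈ X, ∃ y ∈ X, ⟪x, y⟫ ≤ -(1 / (n : ℝ)) := by
  by_contra hcon
  push_neg at hcon
  obtain ⟨ι, hfin, z, w, hz, hai, hw, hw1, hwz⟩ := eq_pos_convex_span_of_mem_convexHull h0
  classical
  have hnR : (0:ℝ) < (n:ℝ) := by exact_mod_cast hn
  -- norms
  have hzX : ∀ i, z i ∈ X := fun i => hz (Set.mem_range_self i)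
  have hnorm : ∀ i, ‖z i‖ = 1 := by
    intro i
    have := hX (hzX i)
    simpa using this
  -- card bounds
  have hcard : Fintype.card ι ≤ n + 1 := by
    refine hai.card_le_finrank_succ.trans ?_
    have h1 : Module.finrank ℝ (vectorSpan ℝ (Set.range z)) ≤
        Module.finrank ℝ (EuclideanSpace ℝ (Fin n)) := Submodule.finrank_le _
    rw [finrank_euclideanSpace_fin] at h1
    omega
  have hcard2 : 2 ≤ Fintype.card ι := by
    by_contra hlt
    push_neg at hlt
    interval_cases hc : Fintype.card ι
    · haveI : IsEmpty ι := Fintype.card_eq_zero_iff.mp hc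
      simp at hw1
    · obtain ⟨i, hi⟩ := Fintype.card_eq_one_iff.mp hc
      have huniv : (Finset.univ : Finset ι) = {i} := by
        apply Finset.eq_singleton_iff_unique_mem.mpr
        exact ⟨Finset.mem_univ i, fun j _ => hi j⟩
      rw [huniv, Finset.sum_singleton] at hw1 hwz
      rw [hw1, one_smul] at hwz
      have := hnorm i
      rw [hwz] at this
      simp at this
  obtain ⟨i0, j0, hij0⟩ := Fintype.exists_pair_of_one_lt_card (α := ι) (by omega)
  -- double sum is zero
  have hsum : ∑ i, ∑ j, w i * w j * ⟪z i, z j⟫ = 0 := by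
    have : ⟪∑ i, w i • z i, ∑ j, w j • z j⟫ = (0:ℝ) := by
      rw [hwz, inner_zero_left]
    rw [sum_inner] at this
    simp only [inner_sum, real_inner_smul_left, real_inner_smul_right] at this
    rw [← this]
    congr 1; funext i; congr 1; funext j; ring
  set k : ℕ := Fintype.card ι with hk
  -- strict bound on each off-diagonal term
  have hstep : ∀ p ∈ (Finset.univ ×ˢ Finset.univ : Finset (ι × ι)),
      (if p.1 = p.2 then w p.1 * w p.2 else -(1/(n:ℝ)) * (w p.1 * w p.2)) ≤
      w p.1 * w p.2 * ⟪z p.1, z p.2⟫ := by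
    rintro ⟨i, j⟩ _
    dsimp only
    split
    · next h =>
      subst h
      have : ⟪z i, z i⟫ = (1:ℝ) := by
        rw [real_inner_self_eq_norm_sq, hnorm i]; norm_num
      rw [this, mul_one]
    · next h =>
      have hzij : z i ≠ z j := fun hc => h (hai.injective hc)
      have hlt : -(1/(n:ℝ)) < ⟪z i, z j⟫ := hcon _ (hzX i) _ (hzX j)
      have hpos : 0 < w i * w j := mul_pos (hw i) (hw j)
      calc -(1/(n:ℝ)) * (w i * w j) ≤ ⟪z i, z j⟫ * (w i * w j) :=
            mul_le_mul_of_nonneg_right hlt.le hpos.le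
        _ = w i * w j * ⟪z i, z j⟫ := by ring
  have hstrict : (if i0 = j0 then w i0 * w j0 else -(1/(n:ℝ)) * (w i0 * w j0)) <
      w i0 * w j0 * ⟪z i0, z j0⟫ := by
    rw [if_neg hij0]
    have hzij : z i0 ≠ z j0 := fun hc => hij0 (hai.injective hc)
    have hlt : -(1/(n:ℝ)) < ⟪z i0, z j0⟫ := hcon _ (hzX i0) _ (hzX j0)
    have hpos : 0 < w i0 * w j0 := mul_pos (hw i0) (hw j0)
    calc -(1/(n:ℝ)) * (w i0 * w j0) < ⟪z i0, z j0⟫ * (w i0 * w j0) :=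
          mul_lt_mul_of_pos_right hlt hpos
      _ = w i0 * w j0 * ⟪z i0, z j0⟫ := by ring
  have hBlt : ∑ i, ∑ j, (if i = j then w i * w j else -(1/(n:ℝ)) * (w i * w j)) <
      ∑ i, ∑ j, w i * w j * ⟪z i, z j⟫ := by
    rw [← Finset.sum_product', ← Finset.sum_product']
    exact Finset.sum_lt_sum hstep ⟨(i0, j0), Finset.mem_univ _, hstrict⟩
  -- compute lower bound B ≥ 0
  have hB : ∑ i, ∑ j, (if i = j then w i * w j else -(1/(n:ℝ)) * (w i * w j)) =
      -(1/(n:ℝ)) + (1 + 1/(n:ℝ)) * ∑ i, w i ^ 2 := by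
    have : ∀ i j : ι, (if i = j then w i * w j else -(1/(n:ℝ)) * (w i * w j)) =
        -(1/(n:ℝ)) * (w i * w j) + (if i = j then (1 + 1/(n:ℝ)) * (w i * w j) else 0) := by
      intro i j; split <;> ring
    simp only [this, Finset.sum_add_distrib]
    simp only [Finset.sum_ite_eq, Finset.mem_univ, if_true]
    have e1 : ∑ i, ∑ j, -(1/(n:ℝ)) * (w i * w j) = -(1/(n:ℝ)) * ((∑ i, w i) * (∑ j, w j)) := by
      rw [Finset.sum_mul_sum, Finset.mul_sum]
      refine Finset.sum_congr rfl fun i _ => ?_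
      rw [Finset.mul_sum]
    rw [e1, hw1]
    have e2 : ∑ i, (1 + 1/(n:ℝ)) * (w i * w i) = (1 + 1/(n:ℝ)) * ∑ i, w i ^ 2 := by
      rw [Finset.mul_sum]
      congr 1; funext i; ring
    rw [e2]; ring
  have hS2 : 1 / ((k:ℝ)) ≤ ∑ i, w i ^ 2 := by
    have hcs : (∑ i, w i) ^ 2 ≤ (k:ℝ) * ∑ i, w i ^ 2 := by
      have := sq_sum_le_card_mul_sum_sq (s := (Finset.univ : Finset ι)) (f := w)
      simpa [hk, Finset.card_univ] using this
    rw [hw1, one_pow] at hcs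
    have hkpos : (0:ℝ) < (k:ℝ) := by exact_mod_cast (by omega : 0 < k)
    rw [div_le_iff₀ hkpos, mul_comm]
    exact hcs
  have hBnonneg : (0:ℝ) ≤ -(1/(n:ℝ)) + (1 + 1/(n:ℝ)) * ∑ i, w i ^ 2 := by
    have h1n : (0:ℝ) < 1 + 1/(n:ℝ) := by positivity
    have hkk : 1/((n:ℝ)+1) ≤ 1/(k:ℝ) := by
      apply one_div_le_one_div_of_le
      · exact_mod_cast (by omega : 0 < k)
      · exact_mod_cast hcard
    have : (1 + 1/(n:ℝ)) * (1/((n:ℝ)+1)) ≤ (1 + 1/(n:ℝ)) * ∑ i, w i ^ 2 :=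
      mul_le_mul_of_nonneg_left (hkk.trans hS2) h1n.le
    have heq : (1 + 1/(n:ℝ)) * (1/((n:ℝ)+1)) = 1/(n:ℝ) := by
      field_simp
    linarith
  rw [hsum, hB] at hBlt
  linarith

/-- Theorem 1.2, second part. Let `m, n ≥ 1` with
`m ≤ 2^r ≤ n < 2^{r+1}`. There is an odd continuous map `f : S^{n-1} → ℝ^{m+n-1}` such
that every finite subset `X ⊆ S^{n-1}` with `0` in the convex hull of `f(X)` has geodesic
diameter at least `π - arccos (1/n)`. -/
theorem stmt8 (m n r : ℕ) (hm : 1 ≤ m) (hn : 1 ≤ n)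
    (h1 : m ≤ 2 ^ r) (h2 : 2 ^ r ≤ n) (h3 : n < 2 ^ (r + 1)) :
    ∃ f : EuclideanSpace ℝ (Fin n) → EuclideanSpace ℝ (Fin (m + n - 1)),
      ContinuousOn f (sphere 0 1) ∧
      (∀ v ∈ sphere (0 : EuclideanSpace ℝ (Fin n)) 1, f (-v) = -f v) ∧
      ∀ X : Finset (EuclideanSpace ℝ (Fin n)),
        ↑X ⊆ sphere (0 : EuclideanSpace ℝ (Fin n)) 1 →
        (0 : EuclideanSpace ℝ (Fin (m + n - 1))) ∈ convexHull ℝ (f '' ↑X) →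
        ∃ x ∈ X, ∃ y ∈ X,
          Real.pi - Real.arccos (1 / n) ≤ Real.arccos ⟪x, y⟫ := by
  have hle : n ≤ m + n - 1 := by omega
  -- the linear inclusion
  let L : EuclideanSpace ℝ (Fin n) →ₗ[ℝ] EuclideanSpace ℝ (Fin (m + n - 1)) :=
    { toFun := fun v => WithLp.toLp 2 (fun i => if h : (i : ℕ) < n then v ⟨i, h⟩ else 0)
      map_add' := by
        intro u v; ext i; dsimp
        split <;> simp [PiLp.add_apply]
      map_smul' := by
        intro c v; ext i; dsimp
        split <;> simp [PiLp.smul_apply] }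
  have hLinj : Function.Injective L := by
    intro u v huv
    ext j
    have := congrArg (fun w => w (Fin.castLE hle j)) huv
    simpa [L, j.isLt] using this
  refine ⟨⇑L, (L.continuous_of_finiteDimensional).continuousOn, ?_, ?_⟩
  · intro v _; exact map_neg L v
  · intro X hX h0
    rw [← L.image_convexHull] at h0
    obtain ⟨y0, hy0mem, hy0⟩ := h0
    have hy00 : y0 = 0 := hLinj (by rw [hy0, map_zero])
    rw [hy00] at hy0mem
    obtain ⟨x, hx, y, hy, hxy⟩ := aux_inner n hn X hX hy0mem
    refine ⟨x, hx, y, hy, ?_⟩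
    have := Real.arccos_neg (1 / (n:ℝ))
    rw [← this]
    unfold Real.arccos
    have : Real.arcsin ⟪x, y⟫ ≤ Real.arcsin (-(1/(n:ℝ))) :=
      Real.monotone_arcsin (by linarith)
    linarith
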